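/- For every field k, the category Vect_k of small k-vector spaces and k-linear maps has enough subobjects: every presheaf P : Vect_kᵒᵖ → Set that preserves small products and admits a monomorphism into a representable presheaf Vect_k(−, V) is itself representable. -/

import Mathlib

open CategoryTheory CategoryTheory.Limits

universe u

namespace EnoughSubobjectsAux

open Opposite

variable {k : Type u} [Field k]

/-- `toSpanSingleton` viewed as a morphism in `ModuleCat`. -/
noncomputable def sp {A : ModuleCat.{u} k} (a : A) : ModuleCat.of k k ⟶ A :=
  ModuleCat.ofHom (LinearMap.toSpanSingleton k A a)

lemma sp_apply {A : ModuleCat.{u} k} (a : A) (c : k) : sp a c = c • a := rfl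

lemma sp_comp {A B : ModuleCat.{u} k} (a : A) (g : A ⟶ B) :
    sp a ≫ g = sp (g a) := by
  refine ModuleCat.hom_ext (LinearMap.ext_ring (R := k) ?_)
  show g (sp a (1 : k)) = sp (g a) (1 : k)
  rw [sp_apply, sp_apply, one_smul, one_smul]

/-- The component of `f` viewed as an honest linear map. -/
noncomputable def fap {P : (ModuleCat.{u} k)ᵒᵖ ⥤ Type u} {V : ModuleCat.{u} k}
    (f : P ⟶ yoneda.obj V) {A : ModuleCat.{u} k} (xp : P.obj (op A)) : A ⟶ V :=
  f.app (op A) xp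

lemma key {P : (ModuleCat.{u} k)ᵒᵖ ⥤ Type u}
    (hP : ∀ ι : Type u, PreservesLimitsOfShape (Discrete ι) P)
    {V : ModuleCat.{u} k} (f : P ⟶ yoneda.obj V)
    {ι : Type u} {A : ModuleCat.{u} k} (b : Module.Basis ι k A) (g : A ⟶ V)
    (hx : ∀ i : ι, ∃ x : P.obj (op (ModuleCat.of k k)),
      f.app (op (ModuleCat.of k k)) x = sp (b i) ≫ g) :
    ∃ y : P.obj (op A), f.app (op A) y = g := by
  choose x hxx using hx
  let c : Cofan (fun _ : ι => ModuleCat.of k k) := Cofan.mk A (fun i => sp (b i))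
  have hc : IsColimit c :=
    mkCofanColimit c
      (fun t => ModuleCat.ofHom (b.constr k (fun i => t.inj i (1 : k))))
      (fun t i => by
        refine ModuleCat.hom_ext (LinearMap.ext_ring (R := k) ?_)
        show (b.constr k (fun j => t.inj j (1 : k))) (sp (b i) (1 : k)) = t.inj i (1 : k)
        rw [sp_apply, one_smul, Module.Basis.constr_basis])
      (fun t m hm => by
        refine ModuleCat.hom_ext (b.ext ?_)
        intro i
        have h1 := LinearMap.congr_fun (congrArg ModuleCat.Hom.hom (hm i)) (1 : k)
        have h2 : (c.inj i ≫ m) (1 : k) = m (b i) := by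
          show m (sp (b i) (1 : k)) = m (b i)
          rw [sp_apply, one_smul]
        rw [ModuleCat.hom_ofHom, Module.Basis.constr_basis, ← h1]
        exact h2.symm)
  haveI := hP ι
  have hPLim : IsLimit (P.mapCone c.op) := isLimitOfPreserves P (Cofan.IsColimit.op hc)
  let s : ((Discrete.functor (fun _ : ι => op (ModuleCat.of k k))) ⋙ P).sections :=
    ⟨fun j => x j.as, by
      rintro ⟨i⟩ ⟨i'⟩ φ
      obtain rfl : i = i' := Discrete.eq_of_hom φ
      exact congrArg (fun g => g (x i)) ((Discrete.functor (fun _ : ι => op (ModuleCat.of k k)) ⋙ P).map_id ⟨i⟩)⟩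
  let y : P.obj (op A) := (Types.isLimitEquivSections hPLim).symm s
  have hy : ∀ i : ι, P.map (sp (b i)).op y = x i := by
    intro i
    exact Types.isLimitEquivSections_symm_apply hPLim s ⟨i⟩
  refine ⟨y, ?_⟩
  refine ModuleCat.hom_ext (b.ext ?_)
  intro i
  have hnat : f.app (op (ModuleCat.of k k)) (P.map (sp (b i)).op y)
      = sp (b i) ≫ (f.app (op A) y) :=
    NatTrans.naturality_apply f (sp (b i)).op y
  rw [hy i, hxx i] at hnat
  have h1 := LinearMap.congr_fun (congrArg ModuleCat.Hom.hom hnat) (1 : k)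
  have h2 : ∀ (h : A ⟶ V), (sp (b i) ≫ h) (1 : k) = h (b i) := by
    intro h
    show h (sp (b i) (1 : k)) = h (b i)
    rw [sp_apply, one_smul]
  rw [h2, h2] at h1
  exact h1.symm

end EnoughSubobjectsAux

open EnoughSubobjectsAux Opposite

/-- Statement 14: For every field `k`, the category of small `k`-vector spaces has enough
subobjects: every presheaf `P : Vect_kᵒᵖ ⥤ Set` that preserves small products and admits
a monomorphism (a componentwise injective natural transformation) into a representable
presheaf `Vect_k(-, V)` is itself representable. -/
theorem moduleCat_hasEnoughSubobjects (k : Type u) [Field k]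
    (P : (ModuleCat.{u} k)ᵒᵖ ⥤ Type u)
    (hP : ∀ ι : Type u, PreservesLimitsOfShape (Discrete ι) P)
    (V : ModuleCat.{u} k) (f : P ⟶ yoneda.obj V)
    (hf : ∀ A : (ModuleCat.{u} k)ᵒᵖ, Function.Injective (f.app A)) :
    P.IsRepresentable := by
  classical
  have hW0 : ∃ x : P.obj (op (ModuleCat.of k k)),
      f.app (op (ModuleCat.of k k)) x = sp (0 : V) := by
    let Z : ModuleCat.{u} k := ModuleCat.of k PUnit
    obtain ⟨y, hy⟩ := key hP f (Module.Basis.empty (ι := PEmpty.{u+1}) (R := k) Z)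
      (0 : Z ⟶ V) (fun i => i.elim)
    refine ⟨P.map (0 : ModuleCat.of k k ⟶ Z).op y, ?_⟩
    have hnat : f.app (op (ModuleCat.of k k)) (P.map (0 : ModuleCat.of k k ⟶ Z).op y)
        = (0 : ModuleCat.of k k ⟶ Z) ≫ f.app (op Z) y :=
      NatTrans.naturality_apply f _ y
    rw [hnat, hy]
    have : sp (0 : V) = (0 : ModuleCat.of k k ⟶ V) := ModuleCat.hom_ext (LinearMap.toSpanSingleton_zero k V)
    rw [this, Limits.comp_zero]
  have hWsmul : ∀ (c : k) (v : V),
      (∃ x : P.obj (op (ModuleCat.of k k)), f.app (op (ModuleCat.of k k)) x = sp v) →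
      ∃ x : P.obj (op (ModuleCat.of k k)), f.app (op (ModuleCat.of k k)) x = sp (c • v) := by
    rintro c v ⟨xv, hv⟩
    refine ⟨P.map (sp (A := ModuleCat.of k k) c).op xv, ?_⟩
    have hnat : f.app (op (ModuleCat.of k k)) (P.map (sp (A := ModuleCat.of k k) c).op xv)
        = sp (A := ModuleCat.of k k) c ≫ f.app (op (ModuleCat.of k k)) xv :=
      NatTrans.naturality_apply f _ xv
    rw [hnat, hv, sp_comp, sp_apply]
  have hWadd : ∀ (v w : V),
      (∃ x : P.obj (op (ModuleCat.of k k)), f.app (op (ModuleCat.of k k)) x = sp v) →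
      (∃ x : P.obj (op (ModuleCat.of k k)), f.app (op (ModuleCat.of k k)) x = sp w) →
      ∃ x : P.obj (op (ModuleCat.of k k)), f.app (op (ModuleCat.of k k)) x = sp (v + w) := by
    rintro v w ⟨xv, hv⟩ ⟨xw, hw⟩
    let A2 : ModuleCat.{u} k := ModuleCat.of k (ULift.{u} Bool → k)
    let b2 : Module.Basis (ULift.{u} Bool) k A2 := Pi.basisFun k (ULift.{u} Bool)
    let g : A2 ⟶ V := ModuleCat.ofHom (b2.constr k (fun i => if i.down then v else w) : A2 →ₗ[k] V)
    obtain ⟨y, hy⟩ := key hP f b2 g (by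
      intro i
      rw [sp_comp]
      have hgb : g (b2 i) = if i.down then v else w := b2.constr_basis k _ i
      rw [hgb]
      by_cases hb : i.down
      · rw [if_pos hb]; exact ⟨xv, hv⟩
      · rw [if_neg hb]; exact ⟨xw, hw⟩)
    refine ⟨P.map (sp (A := A2) ((fun _ => 1) : ULift.{u} Bool → k)).op y, ?_⟩
    have hnat : f.app (op (ModuleCat.of k k))
          (P.map (sp (A := A2) ((fun _ => 1) : ULift.{u} Bool → k)).op y)
        = sp (A := A2) ((fun _ => 1) : ULift.{u} Bool → k) ≫ f.app (op A2) y :=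
      NatTrans.naturality_apply f _ y
    rw [hnat, hy, sp_comp]
    congr 1
    have hsum : ((fun _ => 1) : ULift.{u} Bool → k) = b2 ⟨true⟩ + b2 ⟨false⟩ := by
      funext j
      rcases j with ⟨bj⟩
      have ht : b2 ⟨true⟩ = Pi.single (⟨true⟩ : ULift.{u} Bool) (1 : k) :=
        Pi.basisFun_apply k (ULift.{u} Bool) ⟨true⟩
      have hf' : b2 ⟨false⟩ = Pi.single (⟨false⟩ : ULift.{u} Bool) (1 : k) :=
        Pi.basisFun_apply k (ULift.{u} Bool) ⟨false⟩
      show (1 : k) = (b2 ⟨true⟩ + b2 ⟨false⟩) ⟨bj⟩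
      rw [show (b2 ⟨true⟩ + b2 ⟨false⟩) (⟨bj⟩ : ULift.{u} Bool)
          = b2 ⟨true⟩ (⟨bj⟩ : ULift.{u} Bool) + b2 ⟨false⟩ (⟨bj⟩ : ULift.{u} Bool) from rfl,
        ht, hf']
      cases bj <;> simp [Pi.single_apply]
    show g ((fun _ => 1) : ULift.{u} Bool → k) = v + w
    rw [hsum, map_add]
    have h1 : g (b2 ⟨true⟩) = v := b2.constr_basis k (fun i => if i.down then v else w) ⟨true⟩
    have h2 : g (b2 ⟨false⟩) = w := b2.constr_basis k (fun i => if i.down then v else w) ⟨false⟩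
    rw [h1, h2]
  let W : Submodule k V :=
    { carrier := {v : V | ∃ x : P.obj (op (ModuleCat.of k k)),
        f.app (op (ModuleCat.of k k)) x = sp v}
      zero_mem' := hW0
      add_mem' := fun hv hw => hWadd _ _ hv hw
      smul_mem' := fun c v hv => hWsmul c v hv }
  let M : ModuleCat.{u} k := ModuleCat.of k W
  let ψ : ∀ A : ModuleCat.{u} k, P.obj (op A) → (A ⟶ M) := fun A xp =>
    ModuleCat.ofHom (LinearMap.codRestrict W (fap f xp).hom (fun a =>
      ⟨P.map (sp a).op xp, by
        have hnat : fap f (P.map (sp a).op xp) = sp a ≫ fap f xp :=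
          NatTrans.naturality_apply f (sp a).op xp
        show fap f (P.map (sp a).op xp) = sp (fap f xp a)
        rw [hnat, sp_comp]⟩) : A →ₗ[k] W)
  have hψnat : ∀ {X X' : ModuleCat.{u} k} (α : X ⟶ X') (xp : P.obj (op X')),
      ψ X (P.map α.op xp) = α ≫ ψ X' xp := by
    intro X X' α xp
    refine ModuleCat.hom_ext (LinearMap.ext ?_)
    intro a
    apply Subtype.ext
    show fap f (P.map α.op xp) a = fap f xp (α a)
    have hnat : fap f (P.map α.op xp) = α ≫ fap f xp :=
      NatTrans.naturality_apply f α.op xp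
    rw [hnat]
    rfl
  have hbij : ∀ A : ModuleCat.{u} k, Function.Bijective (ψ A) := by
    intro A
    constructor
    · intro x x' hxx
      apply hf (op A)
      show fap f x = fap f x'
      refine ModuleCat.hom_ext (LinearMap.ext ?_)
      intro a
      have := congrArg (fun (φ : A ⟶ M) => Subtype.val (φ a)) hxx
      exact this
    · intro h
      let b : Module.Basis _ k A := Module.Basis.ofVectorSpace k A
      let g : A ⟶ V := h ≫ ModuleCat.ofHom W.subtype
      obtain ⟨y, hy⟩ := key hP f b g (by
        intro i
        rw [sp_comp]
        exact (h (b i)).2)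
      refine ⟨y, ?_⟩
      refine ModuleCat.hom_ext (LinearMap.ext ?_)
      intro a
      apply Subtype.ext
      show fap f y a = Subtype.val (h a)
      have hy' : fap f y = g := hy
      rw [hy']
      rfl
  let e : ∀ A : ModuleCat.{u} k, P.obj (op A) ≃ (A ⟶ M) := fun A =>
    Equiv.ofBijective (ψ A) (hbij A)
  refine Functor.RepresentableBy.isRepresentable
    (Y := M)
    { homEquiv := fun {A} => (e A).symm
      homEquiv_comp := fun {X X'} α h => ?_ }
  apply (hbij X).injective
  show ψ X _ = ψ X _
  rw [hψnat α ((e X').symm h)]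
  have h1 : ψ X' ((e X').symm h) = h := (e X').apply_symm_apply h
  have h2 : ψ X ((e X).symm (α ≫ h)) = α ≫ h := (e X).apply_symm_apply _
  rw [h1, h2]
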